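/- Let G = (V,E) be a finite simple graph, k a natural number, and S ⊆ V a set such that G − S is a cluster graph. Suppose s ∈ S has at least k+1 neighbors inside some connected component C of G − S and more than k neighbors in (V ∖ S) ∖ C. Then every set X ⊆ V with |X| ≤ k such that G − X is a cluster graph satisfies s ∈ X. -/

import Mathlib

namespace Paper

/-- The graph `G - S` obtained from `G` by deleting the vertices of `S`: edges of `G`
with both endpoints outside `S` (vertices of `S` become isolated). -/
def restrictOutside {V : Type*} (G : SimpleGraph V) (S : Set V) : SimpleGraph V where
  Adj x y := G.Adj x y ∧ x ∉ S ∧ y ∉ S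
  symm := ⟨fun _ _ h => ⟨h.1.symm, h.2.2, h.2.1⟩⟩
  loopless := ⟨fun x h => G.loopless.irrefl x h.1⟩

/-- The vertex set of the connected component of `v` in `G`. -/
def compSet {V : Type*} (G : SimpleGraph V) (v : V) : Set V := {w | G.Reachable v w}

/-- A cluster graph: no induced `P₃`; equivalently, every connected component induces a clique. -/
def IsClusterGraph {V : Type*} (G : SimpleGraph V) : Prop :=
  ∀ ⦃x y z : V⦄, G.Adj x y → G.Adj y z → x ≠ z → G.Adj x z

/-- `G - X` is a disjoint union of cliques each on exactly `c` vertices. -/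
def IsUniformClusterDel {V : Type*} (G : SimpleGraph V) (X : Set V) (c : ℕ) : Prop :=
  ∀ w ∉ X, (restrictOutside G X).IsClique (compSet (restrictOutside G X) w) ∧
    (compSet (restrictOutside G X) w).ncard = c


lemma walk_not_mem {V : Type*} {G : SimpleGraph V} {S : Set V} :
    ∀ {v w : V}, (restrictOutside G S).Walk v w → v ∉ S → w ∉ S
  | _, _, SimpleGraph.Walk.nil, hv => hv
  | _, _, SimpleGraph.Walk.cons h p, _ => walk_not_mem p h.2.2

/-- If `G - S` is a cluster graph and `s ∈ S` has at least `k + 1` neighbors in the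
connected component `C` of `G - S` and more than `k` neighbors in `(V ∖ S) ∖ C`,
then every `X` of size at most `k` with `G - X` a cluster graph contains `s`. -/
theorem stmt1 {V : Type*} [Fintype V] (G : SimpleGraph V) (k : ℕ) (S : Set V)
    (hcluster : IsClusterGraph (restrictOutside G S))
    (s : V) (hsS : s ∈ S)
    (v : V) (hvS : v ∉ S)
    (C : Set V) (hC : C = compSet (restrictOutside G S) v)
    (hin : k + 1 ≤ (C ∩ G.neighborSet s).ncard)
    (hout : k < (({t : V | t ∉ S ∧ t ∉ C}) ∩ G.neighborSet s).ncard)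
    (X : Set V) (hXcard : X.ncard ≤ k)
    (hXcluster : IsClusterGraph (restrictOutside G X)) :
    s ∈ X := by
  by_contra hsX
  have ha : ∃ a, a ∈ C ∩ G.neighborSet s ∧ a ∉ X := by
    by_contra h
    push_neg at h
    have hsub : C ∩ G.neighborSet s ⊆ X := fun a haA => h a haA
    have := Set.ncard_le_ncard hsub X.toFinite
    omega
  obtain ⟨a, ⟨haC, haN⟩, haX⟩ := ha
  have hb : ∃ b, b ∈ ({t : V | t ∉ S ∧ t ∉ C}) ∩ G.neighborSet s ∧ b ∉ X := by
    by_contra h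
    push_neg at h
    have hsub : ({t : V | t ∉ S ∧ t ∉ C}) ∩ G.neighborSet s ⊆ X := fun b hbA => h b hbA
    have := Set.ncard_le_ncard hsub X.toFinite
    omega
  obtain ⟨b, ⟨⟨hbS, hbC⟩, hbN⟩, hbX⟩ := hb
  have haS : a ∉ S := by
    subst hC
    obtain ⟨p⟩ := haC
    exact walk_not_mem p hvS
  have hab : a ≠ b := fun h => hbC (h ▸ haC)
  have h1 : (restrictOutside G X).Adj a s := ⟨haN.symm, haX, hsX⟩
  have h2 : (restrictOutside G X).Adj s b := ⟨hbN, hsX, hbX⟩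
  have h3 := hXcluster h1 h2 hab
  have h4 : (restrictOutside G S).Adj a b := ⟨h3.1, haS, hbS⟩
  apply hbC
  subst hC
  exact haC.trans h4.reachable

end Paper
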